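/- arXiv:2301.04624 — 2 statements merged into one kernel-verified Lean document; each statement's English description precedes it below -/
import Mathlib

section
/- Let k ≥ 2 and let d, D be positive integers with k ≤ dD, and let C_k be the associated transfer matrix. Then every eigenvalue of C_k (as a matrix over ℂ) is a non-negative real number. -/
open Equiv Matrix
open scoped ComplexOrder

/-- Number of cycles of a permutation, counting fixed points as 1-cycles. -/
noncomputable def cyc {k : ℕ} (π : Equiv.Perm (Fin k)) : ℕ :=
  (k - π.cycleType.sum) + Multiset.card π.cycleType

/-- Gram matrix `G(q)_{στ} = q^{#(στ⁻¹)}`. -/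
noncomputable def Gram (k q : ℕ) :
    Matrix (Equiv.Perm (Fin k)) (Equiv.Perm (Fin k)) ℝ :=
  Matrix.of fun σ τ => (q : ℝ) ^ cyc (σ * τ⁻¹)

/-- Weingarten matrix `W = G(q)⁻¹`, so that `Wg(στ⁻¹, q) = W σ τ`. -/
noncomputable def WgM (k q : ℕ) :
    Matrix (Equiv.Perm (Fin k)) (Equiv.Perm (Fin k)) ℝ :=
  (Gram k q)⁻¹

/-- Transfer matrix `⟨τ|C_k|θ⟩ = Σ_σ Wg(στ⁻¹, dD) d^{#(σ)} D^{#(σθ⁻¹)}`. -/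
noncomputable def Ck (k d D : ℕ) :
    Matrix (Equiv.Perm (Fin k)) (Equiv.Perm (Fin k)) ℝ :=
  Matrix.of fun τ θ =>
    ∑ σ : Equiv.Perm (Fin k),
      WgM k (d * D) σ τ * (d : ℝ) ^ cyc σ * (D : ℝ) ^ cyc (σ * θ⁻¹)

section AuxPerm

variable {k : ℕ}

lemma cyc_inv (π : Equiv.Perm (Fin k)) : cyc π⁻¹ = cyc π := by
  simp [cyc, Equiv.Perm.cycleType_inv]

lemma cyc_conj (σ π : Equiv.Perm (Fin k)) : cyc (σ * π * σ⁻¹) = cyc π := by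
  simp [cyc, Equiv.Perm.cycleType_conj]

lemma cyc_mul_comm (x y : Equiv.Perm (Fin k)) : cyc (x * y) = cyc (y * x) := by
  have h := cyc_conj y (x * y)
  have heq : y * (x * y) * y⁻¹ = y * x := by group
  rw [heq] at h
  exact h.symm

/-- The same-cycle setoid. -/
def scSetoid (π : Equiv.Perm (Fin k)) : Setoid (Fin k) :=
  ⟨π.SameCycle, ⟨fun x => Equiv.Perm.SameCycle.refl π x, fun h => h.symm, fun h h' => h.trans h'⟩⟩

instance scDec (π : Equiv.Perm (Fin k)) : DecidableRel (scSetoid π).r := fun a b =>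
  inferInstanceAs (Decidable (π.SameCycle a b))

noncomputable instance scFin (π : Equiv.Perm (Fin k)) : Fintype (Quotient (scSetoid π)) :=
  @Quotient.fintype _ _ (scSetoid π) (scDec π)

private lemma fixed_zpow {β : Type*} {π : Equiv.Perm (Fin k)} {f : Fin k → β}
    (hf : f ∘ ⇑π = f) : ∀ (i : ℤ) (x : Fin k), f ((π ^ i) x) = f x := by
  have hstep : ∀ x, f (π x) = f x := fun x => congrFun hf x
  have hnat : ∀ (n : ℕ) (x : Fin k), f ((π ^ n) x) = f x := by
    intro n
    induction n with
    | zero => simp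
    | succ n ih =>
        intro x
        rw [pow_succ, Equiv.Perm.mul_apply, ih, hstep]
  intro i x
  cases i with
  | ofNat n => simpa using hnat n x
  | negSucc n =>
      rw [zpow_negSucc]
      have h2 := hnat (n + 1) ((π ^ (n + 1))⁻¹ x)
      rw [Equiv.Perm.inv_def, Equiv.apply_symm_apply] at h2
      exact h2.symm

/-- Functions invariant under `π` correspond to functions on the orbit space. -/
noncomputable def fixedFunEquiv (π : Equiv.Perm (Fin k)) (q : ℕ) :
    {f : Fin k → Fin q // f ∘ ⇑π = f} ≃ (Quotient (scSetoid π) → Fin q) where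
  toFun f := Quotient.lift f.1 (fun a b hab => by
    obtain ⟨i, hi⟩ := hab
    rw [← hi, fixed_zpow f.2])
  invFun h := ⟨fun x => h ⟦x⟧, funext fun x => by
    show h ⟦π x⟧ = h ⟦x⟧
    refine congrArg h (Quotient.sound ?_)
    exact ⟨-1, by simp⟩⟩
  left_inv f := Subtype.ext (funext fun x => rfl)
  right_inv h := funext (Quotient.ind fun x => rfl)

/-- A chosen point in the support of a cycle factor. -/
noncomputable def cpt (π : Equiv.Perm (Fin k))
    (c : {c : Equiv.Perm (Fin k) // c ∈ π.cycleFactorsFinset}) : Fin k :=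
  ((Equiv.Perm.mem_cycleFactorsFinset_iff.mp c.2).1.nonempty_support).choose

lemma cpt_mem (π : Equiv.Perm (Fin k)) (c : {c : Equiv.Perm (Fin k) // c ∈ π.cycleFactorsFinset}) :
    cpt π c ∈ (c : Equiv.Perm (Fin k)).support :=
  ((Equiv.Perm.mem_cycleFactorsFinset_iff.mp c.2).1.nonempty_support).choose_spec

/-- Orbits are fixed points plus cycle factors. -/
noncomputable def quotEquiv (π : Equiv.Perm (Fin k)) :
    Quotient (scSetoid π) ≃
      ({x : Fin k // π x = x} ⊕ {c : Equiv.Perm (Fin k) // c ∈ π.cycleFactorsFinset}) where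
  toFun := Quotient.lift (fun x =>
      if h : π x = x then Sum.inl ⟨x, h⟩
      else Sum.inr ⟨π.cycleOf x,
        Equiv.Perm.cycleOf_mem_cycleFactorsFinset_iff.2 (Equiv.Perm.mem_support.2 h)⟩)
    (by
      intro a b hab
      change π.SameCycle a b at hab
      by_cases ha : π a = a
      · obtain ⟨i, hi⟩ := hab
        have hba : b = a := by
          rw [← hi, Equiv.Perm.zpow_apply_eq_self_of_apply_eq_self ha]
        subst hba; rfl
      · have hb : ¬ π b = b := by
          intro hb
          obtain ⟨j, hj⟩ := hab.symm
          have hba : a = b := by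
            rw [← hj, Equiv.Perm.zpow_apply_eq_self_of_apply_eq_self hb]
          exact ha (hba ▸ hb)
        simp only [dif_neg ha, dif_neg hb]
        exact congrArg Sum.inr (Subtype.ext hab.cycleOf_eq))
  invFun := Sum.elim (fun x => ⟦x.1⟧) (fun c => ⟦cpt π c⟧)
  left_inv := by
    refine Quotient.ind (fun x => ?_)
    by_cases h : π x = x
    · simp only [Quotient.lift_mk, dif_pos h, Sum.elim_inl]
    · simp only [Quotient.lift_mk, dif_neg h, Sum.elim_inr]
      refine Quotient.sound ?_
      have hpt := cpt_mem π ⟨π.cycleOf x,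
        Equiv.Perm.cycleOf_mem_cycleFactorsFinset_iff.2 (Equiv.Perm.mem_support.2 h)⟩
      have h2 := Equiv.Perm.mem_support_cycleOf_iff.mp hpt
      exact h2.1.symm
  right_inv := by
    rintro (⟨x, hx⟩ | ⟨c, hc⟩)
    · simp only [Sum.elim_inl, Quotient.lift_mk, dif_pos hx]
    · have hpt : cpt π ⟨c, hc⟩ ∈ c.support := cpt_mem π ⟨c, hc⟩
      have hcmem := Equiv.Perm.mem_cycleFactorsFinset_iff.mp hc
      have hmoved : ¬ π (cpt π ⟨c, hc⟩) = cpt π ⟨c, hc⟩ := by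
        have h1 : c (cpt π ⟨c, hc⟩) = π (cpt π ⟨c, hc⟩) := hcmem.2 _ hpt
        have h2 : c (cpt π ⟨c, hc⟩) ≠ cpt π ⟨c, hc⟩ := Equiv.Perm.mem_support.mp hpt
        rw [h1] at h2
        exact h2
      simp only [Sum.elim_inr, Quotient.lift_mk, dif_neg hmoved]
      exact congrArg Sum.inr (Subtype.ext (Equiv.Perm.cycle_is_cycleOf hpt hc).symm)

lemma card_quot (π : Equiv.Perm (Fin k)) :
    Fintype.card (Quotient (scSetoid π)) = cyc π := by
  rw [Fintype.card_congr (quotEquiv π), Fintype.card_sum, cyc]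
  congr 1
  · rw [Equiv.Perm.sum_cycleType, Fintype.card_subtype]
    have hsupp : π.support = Finset.univ.filter (fun x => ¬ π x = x) := by
      ext x; simp [Equiv.Perm.mem_support]
    have h2 := Finset.card_filter_add_card_filter_not
      (s := (Finset.univ : Finset (Fin k))) (p := fun x => π x = x)
    rw [Finset.card_univ, Fintype.card_fin] at h2
    rw [hsupp]
    omega
  · rw [Fintype.card_coe, Equiv.Perm.cycleType_def, Multiset.card_map]
    rfl

lemma card_fixedfun (π : Equiv.Perm (Fin k)) (q : ℕ) :
    Fintype.card {f : Fin k → Fin q // f ∘ ⇑π = f} = q ^ cyc π := by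
  classical
  rw [Fintype.card_congr (fixedFunEquiv π q), Fintype.card_fun, Fintype.card_fin, card_quot]

lemma card_pairfun (σ τ : Equiv.Perm (Fin k)) (q : ℕ) :
    (Finset.univ.filter fun p : (Fin k → Fin q) × (Fin k → Fin q) =>
      p.2 = p.1 ∘ ⇑σ ∧ p.2 = p.1 ∘ ⇑τ).card = q ^ cyc (σ * τ⁻¹) := by
  rw [← card_fixedfun (σ * τ⁻¹) q, ← Fintype.card_subtype]
  apply Fintype.card_congr
  refine
    { toFun := fun p => ⟨p.1.1, ?_⟩
      invFun := fun f => ⟨(f.1, f.1 ∘ ⇑σ), rfl, ?_⟩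
      left_inv := ?_
      right_inv := ?_ }
  · funext x
    have h := congrFun (p.2.1.symm.trans p.2.2) (τ⁻¹ x)
    simp only [Function.comp_apply] at h
    have h2 : p.1.1 (τ (τ⁻¹ x)) = p.1.1 x := congrArg _ (τ.apply_symm_apply x)
    simpa [Equiv.Perm.mul_apply] using h.trans h2
  · funext y
    have h := congrFun f.2 (τ y)
    simp only [Function.comp_apply, Equiv.Perm.mul_apply, Equiv.Perm.inv_def, Equiv.symm_apply_apply] at h
    simp only [Function.comp_apply]
    exact h
  · rintro ⟨⟨f, g⟩, h1, h2⟩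
    exact Subtype.ext (Prod.ext rfl h1.symm)
  · rintro ⟨f, hf⟩
    rfl

end AuxPerm

section AuxMatrix

/-- The Gram matrix over `ℂ`. -/
noncomputable def Gc (k q : ℕ) : Matrix (Equiv.Perm (Fin k)) (Equiv.Perm (Fin k)) ℂ :=
  (Gram k q).map ((↑) : ℝ → ℂ)

lemma Gc_apply (k q : ℕ) (σ τ : Equiv.Perm (Fin k)) :
    Gc k q σ τ = (q : ℂ) ^ cyc (σ * τ⁻¹) := by
  simp [Gc, Gram]

/-- 0/1 incidence matrix realizing the Gram matrix as `N * Nᴴ`. -/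
noncomputable def Nmat (k q : ℕ) :
    Matrix (Equiv.Perm (Fin k)) ((Fin k → Fin q) × (Fin k → Fin q)) ℂ :=
  Matrix.of fun σ p => if p.2 = p.1 ∘ ⇑σ then 1 else 0

lemma gram_eq_mul (k q : ℕ) : Gc k q = Nmat k q * (Nmat k q)ᴴ := by
  ext σ τ
  rw [Gc_apply, Matrix.mul_apply]
  have hterm : ∀ p : (Fin k → Fin q) × (Fin k → Fin q),
      Nmat k q σ p * (Nmat k q)ᴴ p τ =
        if (p.2 = p.1 ∘ ⇑σ ∧ p.2 = p.1 ∘ ⇑τ) then (1 : ℂ) else 0 := by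
    intro p
    simp only [Nmat, Matrix.conjTranspose_apply, Matrix.of_apply]
    by_cases h1 : p.2 = p.1 ∘ ⇑σ <;> by_cases h2 : p.2 = p.1 ∘ ⇑τ <;>
      simp [h1, h2]
  rw [Finset.sum_congr rfl (fun p _ => hterm p), Finset.sum_boole, card_pairfun]
  push_cast
  ring

lemma gram_psd (k q : ℕ) : (Gc k q).PosSemidef := by
  rw [gram_eq_mul]
  exact Matrix.posSemidef_self_mul_conjTranspose _

lemma gram_commute (k a b : ℕ) : Gc k a * Gc k b = Gc k b * Gc k a := by
  ext σ τ
  rw [Matrix.mul_apply, Matrix.mul_apply]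
  refine Fintype.sum_equiv
    ⟨fun ρ => σ * ρ⁻¹ * τ, fun ρ => (σ⁻¹ * ρ * τ⁻¹)⁻¹, fun ρ => by group, fun ρ => by group⟩
    _ _ (fun ρ => ?_)
  simp only [Equiv.coe_fn_mk, Gc_apply]
  have h1 : σ * ρ⁻¹ * τ * τ⁻¹ = σ * ρ⁻¹ := by group
  have h2 : σ * (σ * ρ⁻¹ * τ)⁻¹ = σ * (τ⁻¹ * ρ) * σ⁻¹ := by group
  rw [h1, h2, cyc_conj]
  have h3 : cyc (τ⁻¹ * ρ) = cyc (ρ * τ⁻¹) := cyc_mul_comm τ⁻¹ ρ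
  rw [h3]
  ring

lemma gram_transpose (k q : ℕ) : (Gram k q)ᵀ = Gram k q := by
  ext σ τ
  simp only [Matrix.transpose_apply, Gram, Matrix.of_apply]
  have h : τ * σ⁻¹ = (σ * τ⁻¹)⁻¹ := by group
  rw [h, cyc_inv]

lemma gram_mul_Ck (k d D : ℕ) (h : IsUnit (Gram k (d * D)).det) :
    Gram k (d * D) * Ck k d D =
      (Matrix.diagonal fun σ : Equiv.Perm (Fin k) => (d : ℝ) ^ cyc σ) * Gram k D := by
  have hinvsym : ((Gram k (d * D))⁻¹)ᵀ = (Gram k (d * D))⁻¹ := by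
    rw [Matrix.transpose_nonsing_inv, gram_transpose]
  have hCk : Ck k d D = (Gram k (d * D))⁻¹ *
      ((Matrix.diagonal fun σ : Equiv.Perm (Fin k) => (d : ℝ) ^ cyc σ) * Gram k D) := by
    ext τ θ
    rw [Matrix.mul_apply]
    simp only [Ck, Matrix.of_apply, WgM]
    refine Finset.sum_congr rfl (fun σ _ => ?_)
    have hsymentry : (Gram k (d * D))⁻¹ σ τ = (Gram k (d * D))⁻¹ τ σ := by
      conv_lhs => rw [← hinvsym]
      rfl
    rw [hsymentry, Matrix.diagonal_mul]
    simp only [Gram, Matrix.of_apply]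
    ring
  rw [hCk, ← Matrix.mul_assoc, Matrix.mul_nonsing_inv _ h, Matrix.one_mul]

/-- A product of commuting PSD matrices is PSD. -/
lemma posSemidef_mul_of_commute {n : Type*} [Fintype n] [DecidableEq n]
    {A B : Matrix n n ℂ} (hA : A.PosSemidef) (hB : B.PosSemidef)
    (hc : A * B = B * A) : (A * B).PosSemidef := by
  have hH := hA.1
  set U : Matrix n n ℂ := (hH.eigenvectorUnitary : Matrix n n ℂ) with hU
  set ev : n → ℝ := hH.eigenvalues with hev
  set D0 : Matrix n n ℂ := Matrix.diagonal (RCLike.ofReal ∘ ev) with hD0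
  have hspec : A = U * D0 * star U := hH.spectral_theorem
  have hU1 : U * star U = 1 := (Matrix.mem_unitaryGroup_iff).mp hH.eigenvectorUnitary.2
  have hU2 : star U * U = 1 := (Matrix.mem_unitaryGroup_iff').mp hH.eigenvectorUnitary.2
  set M : Matrix n n ℂ := star U * B * U with hM
  have hMpsd : M.PosSemidef := by
    have h := hB.mul_mul_conjTranspose_same (star U)
    simpa [Matrix.star_eq_conjTranspose, hM] using h
  have cancel : ∀ W : Matrix n n ℂ, star U * (U * W * star U) * U = W := by
    intro W
    calc star U * (U * W * star U) * U
        = (star U * U) * W * (star U * U) := by simp only [Matrix.mul_assoc]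
      _ = W := by rw [hU2]; simp
  have hAB : A * B = U * (D0 * M) * star U := by
    calc A * B = (U * D0 * star U) * B := by rw [← hspec]
      _ = U * D0 * ((star U * B * U) * star U) := by
          simp only [Matrix.mul_assoc, Matrix.mul_one, hU1]
      _ = U * (D0 * M) * star U := by simp only [hM, Matrix.mul_assoc]
  have hBA : B * A = U * (M * D0) * star U := by
    calc B * A = B * (U * D0 * star U) := by rw [← hspec]
      _ = U * ((star U * B * U) * D0) * star U := by
          rw [← Matrix.one_mul (B * (U * D0 * star U)), ← hU1]
          simp only [Matrix.mul_assoc]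
      _ = U * (M * D0) * star U := by simp only [hM, Matrix.mul_assoc]
  have hDM : D0 * M = M * D0 := by
    have e1 : star U * (A * B) * U = D0 * M := by rw [hAB, cancel]
    have e2 : star U * (B * A) * U = M * D0 := by rw [hBA, cancel]
    rw [← e1, ← e2, hc]
  have evnn : ∀ i, 0 ≤ ev i := fun i => hA.eigenvalues_nonneg i
  have hkey : ∀ i j, (RCLike.ofReal (ev i) : ℂ) * M i j =
      ((RCLike.ofReal (Real.sqrt (ev i)) : ℂ) * (RCLike.ofReal (Real.sqrt (ev j)) : ℂ)) * M i j := by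
    intro i j
    by_cases hM0 : M i j = 0
    · rw [hM0]; ring
    · have hentry : (RCLike.ofReal (ev i) : ℂ) * M i j = M i j * (RCLike.ofReal (ev j) : ℂ) := by
        have := congrFun (congrFun hDM i) j
        rwa [Matrix.diagonal_mul, Matrix.mul_diagonal] at this
      have hij : ev i = ev j := by
        have h3 : M i j * (RCLike.ofReal (ev i) : ℂ) = M i j * (RCLike.ofReal (ev j) : ℂ) := by
          rw [mul_comm (M i j) ((RCLike.ofReal (ev i) : ℂ)), hentry]
        have h4 := mul_left_cancel₀ hM0 h3
        exact RCLike.ofReal_inj.mp h4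
      rw [hij, ← RCLike.ofReal_mul, Real.mul_self_sqrt (evnn j)]
  have hDMpsd : (D0 * M).PosSemidef := by
    refine Matrix.PosSemidef.of_dotProduct_mulVec_nonneg ?_ ?_
    · show (D0 * M)ᴴ = D0 * M
      have hstar : star (RCLike.ofReal ∘ ev : n → ℂ) = RCLike.ofReal ∘ ev := by
        funext i
        simp [RCLike.star_def, RCLike.conj_ofReal]
      have hD0h : D0ᴴ = D0 := by
        rw [hD0, Matrix.diagonal_conjTranspose, hstar]
      rw [Matrix.conjTranspose_mul, hD0h, hMpsd.1.eq, ← hDM]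
    · intro x
      set z : n → ℂ := fun i => (RCLike.ofReal (Real.sqrt (ev i)) : ℂ) * x i with hz
      have hform : star x ⬝ᵥ (D0 * M) *ᵥ x = star z ⬝ᵥ M *ᵥ z := by
        simp only [dotProduct, Matrix.mulVec, dotProduct, Pi.star_apply,
          Finset.mul_sum, hz]
        refine Finset.sum_congr rfl (fun i _ => ?_)
        refine Finset.sum_congr rfl (fun j _ => ?_)
        rw [hD0, Matrix.diagonal_mul]
        simp only [Function.comp_apply, star_mul', RCLike.star_def, RCLike.conj_ofReal]
        linear_combination ((starRingEnd ℂ) (x i) * x j) * hkey i j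
      rw [hform]
      exact hMpsd.dotProduct_mulVec_nonneg z
  rw [hAB, Matrix.star_eq_conjTranspose U]
  exact hDMpsd.mul_mul_conjTranspose_same U

end AuxMatrix

lemma map_mul_ofReal {n : Type*} [Fintype n] (A B : Matrix n n ℝ) :
    (A * B).map ((↑) : ℝ → ℂ) = A.map ((↑) : ℝ → ℂ) * B.map ((↑) : ℝ → ℂ) := by
  have h : ((↑) : ℝ → ℂ) = ⇑Complex.ofRealHom := rfl
  rw [h, Matrix.map_mul]

/-- Every eigenvalue of `C_k`, viewed as a matrix over `ℂ`, is a non-negative real number. -/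
theorem eigenvalues_Ck_nonneg_real (k d D : ℕ) (hk : 2 ≤ k) (hd : 0 < d) (hD : 0 < D)
    (hkdD : k ≤ d * D) (lam : ℂ)
    (hlam : ∃ v : Equiv.Perm (Fin k) → ℂ, v ≠ 0 ∧
      ((Ck k d D).map ((↑) : ℝ → ℂ)).mulVec v = lam • v) :
    ∃ x : ℝ, 0 ≤ x ∧ lam = (x : ℂ) := by
  obtain ⟨v, hv0, hv⟩ := hlam
  by_cases hdet : IsUnit (Gram k (d * D)).det
  case neg =>
    have hCk0 : Ck k d D = 0 := by
      ext τ θ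
      simp [Ck, WgM, Matrix.nonsing_inv_apply_not_isUnit _ hdet]
    rw [hCk0] at hv
    have hmap : ((0 : Matrix (Equiv.Perm (Fin k)) (Equiv.Perm (Fin k)) ℝ)).map ((↑) : ℝ → ℂ)
        = 0 := by
      ext τ θ; simp
    rw [hmap, Matrix.zero_mulVec] at hv
    rcases smul_eq_zero.mp hv.symm with h6 | h6
    · exact ⟨0, le_refl 0, by rw [h6]; simp⟩
    · exact absurd h6 hv0
  case pos =>
    have hmain : Gc k (d * D) * ((Ck k d D).map ((↑) : ℝ → ℂ)) =
        Matrix.diagonal (fun σ : Equiv.Perm (Fin k) => (((d : ℝ) ^ cyc σ : ℝ) : ℂ)) *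
          Gc k D := by
      have hreal := gram_mul_Ck k d D hdet
      have hmapped := congrArg (fun M => M.map ((↑) : ℝ → ℂ)) hreal
      rw [map_mul_ofReal, map_mul_ofReal, Matrix.diagonal_map (by simp)] at hmapped
      exact hmapped
    set Δc : Matrix (Equiv.Perm (Fin k)) (Equiv.Perm (Fin k)) ℂ :=
      Matrix.diagonal (fun σ : Equiv.Perm (Fin k) => (((d : ℝ) ^ cyc σ : ℝ) : ℂ)) with hDc
    have key1 : Δc.mulVec ((Gc k D).mulVec v) = lam • ((Gc k (d * D)).mulVec v) := by
      rw [Matrix.mulVec_mulVec, ← hmain, ← Matrix.mulVec_mulVec, hv, Matrix.mulVec_smul]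
    set w : Equiv.Perm (Fin k) → ℂ := (Gc k D).mulVec v with hw
    have hcomm : Gc k D * Gc k (d * D) = Gc k (d * D) * Gc k D := gram_commute k D (d * D)
    have hpsd : (Gc k D * Gc k (d * D)).PosSemidef :=
      posSemidef_mul_of_commute (gram_psd k D) (gram_psd k (d * D)) hcomm
    set t : ℂ := star v ⬝ᵥ ((Gc k D * Gc k (d * D)).mulVec v) with ht
    have ht0 : 0 ≤ t := hpsd.dotProduct_mulVec_nonneg v
    have htw : star w ⬝ᵥ ((Gc k (d * D)).mulVec v) = t := by
      show star ((Gc k D).mulVec v) ⬝ᵥ ((Gc k (d * D)).mulVec v) =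
        star v ⬝ᵥ ((Gc k D * Gc k (d * D)).mulVec v)
      rw [Matrix.star_mulVec, ← Matrix.dotProduct_mulVec, Matrix.mulVec_mulVec,
        (gram_psd k D).1.eq]
    set rr : ℝ := ∑ σ : Equiv.Perm (Fin k), (d : ℝ) ^ cyc σ * Complex.normSq (w σ) with hrr
    have hrr0 : 0 ≤ rr :=
      Finset.sum_nonneg fun σ _ => mul_nonneg (by positivity) (Complex.normSq_nonneg _)
    have hr : star w ⬝ᵥ (Δc.mulVec w) = (rr : ℂ) := by
      show star w ⬝ᵥ ((Matrix.diagonal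
          (fun σ : Equiv.Perm (Fin k) => (((d : ℝ) ^ cyc σ : ℝ) : ℂ))).mulVec w) =
        ((∑ σ : Equiv.Perm (Fin k), (d : ℝ) ^ cyc σ * Complex.normSq (w σ) : ℝ) : ℂ)
      simp only [dotProduct, Matrix.mulVec_diagonal, Pi.star_apply, RCLike.star_def]
      push_cast
      refine Finset.sum_congr rfl fun σ _ => ?_
      rw [Complex.normSq_eq_conj_mul_self]
      ring
    have hlamt : lam * t = (rr : ℂ) := by
      rw [← hr, key1, dotProduct_smul, smul_eq_mul, htw]
    rcases eq_or_ne t 0 with htz | htne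
    · have hrrz : rr = 0 := by
        have h7 : (rr : ℂ) = 0 := by rw [← hlamt, htz, mul_zero]
        exact_mod_cast h7
      have hsum0 : ∑ σ : Equiv.Perm (Fin k), (d : ℝ) ^ cyc σ * Complex.normSq (w σ) = 0 :=
        hrr.symm.trans hrrz
      have hwz : w = 0 := by
        funext σ
        have hterm := (Finset.sum_eq_zero_iff_of_nonneg (fun σ _ =>
          mul_nonneg (by positivity : (0:ℝ) ≤ (d : ℝ) ^ cyc σ)
            (Complex.normSq_nonneg (w σ)))).mp hsum0 σ (Finset.mem_univ σ)
        have hdpos : (0 : ℝ) < (d : ℝ) ^ cyc σ := by positivity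
        have h8 := (mul_eq_zero.mp hterm).resolve_left (ne_of_gt hdpos)
        simpa using Complex.normSq_eq_zero.mp h8
      have h5 : lam • ((Gc k (d * D)).mulVec v) = 0 := by
        rw [← key1, hwz, Matrix.mulVec_zero]
      rcases smul_eq_zero.mp h5 with h6 | h6
      · exact ⟨0, le_refl 0, by rw [h6]; simp⟩
      · exfalso
        have hdetc : IsUnit (Gc k (d * D)).det := by
          have hdc : (Gc k (d * D)).det = (((Gram k (d * D)).det : ℝ) : ℂ) :=
            (RingHom.map_det Complex.ofRealHom _).symm
          rw [hdc, isUnit_iff_ne_zero]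
          exact_mod_cast hdet.ne_zero
        have hv' : v = 0 := by
          calc v = ((Gc k (d * D))⁻¹ * Gc k (d * D)).mulVec v := by
                rw [Matrix.nonsing_inv_mul _ hdetc, Matrix.one_mulVec]
            _ = (Gc k (d * D))⁻¹.mulVec ((Gc k (d * D)).mulVec v) := by
                rw [Matrix.mulVec_mulVec]
            _ = 0 := by rw [h6, Matrix.mulVec_zero]
        exact hv0 hv'
    · have htim : t.im = 0 := ((Complex.le_def.mp ht0).2).symm
      have htre : 0 ≤ t.re := by
        have := (Complex.le_def.mp ht0).1
        simpa using this
      have htreal : t = ((t.re : ℝ) : ℂ) := by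
        apply Complex.ext <;> simp [htim]
      have htrene : t.re ≠ 0 := by
        intro h
        apply htne
        rw [htreal, h]
        simp
      refine ⟨rr / t.re, div_nonneg hrr0 htre, ?_⟩
      have hlameq : lam = (rr : ℂ) / t := by
        rw [eq_div_iff htne]
        exact hlamt
      rw [hlameq, htreal]
      push_cast
      simp [Complex.ofReal_re]
end

section
/- Let d, D ≥ 2 be integers, set α = (d²D − D)/(d²D² − 1) and β = (dD² − d)/(d²D² − 1), and let C_2 = [[1, α],[0, β]] and T_x = [[β, 0],[α, 1]] (the transfer matrices for k = 2 at the identity and at the transposition x = (1 2), in the basis (e, x)). Let δ_e = (1, 0)ᵀ, let a, b ≥ 1 be integers, and let v ∈ ℝ² be a row vector with v C_2 = v and v·δ_e = 1. Then v T_x^a δ_e > 0, v T_x^b δ_e > 0, and there exists a constant K ∈ ℝ such that for every integer r ≥ 0, v T_x^a C_2^r T_x^b δ_e = (v T_x^a δ_e)(v T_x^b δ_e)(1 + K β^r). (This is the exact transfer-matrix identity underlying the result that the average Rényi-2 mutual information of the random MPS ensemble satisfies E I_2(A:B) = log(1 + K β^r), hence decays exponentially with correlation length ξ_1D = −1/log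 β.) -/
open Matrix

/-- `α = (d²D − D)/(d²D² − 1)`. -/
noncomputable def alph (d D : ℕ) : ℝ :=
  ((d : ℝ) ^ 2 * D - D) / ((d : ℝ) ^ 2 * D ^ 2 - 1)

/-- `β = (dD² − d)/(d²D² − 1)`. -/
noncomputable def bet (d D : ℕ) : ℝ :=
  ((d : ℝ) * D ^ 2 - d) / ((d : ℝ) ^ 2 * D ^ 2 - 1)

/-- The `k = 2` transfer matrix at the identity, `C₂ = [[1, α], [0, β]]`. -/
noncomputable def C2 (d D : ℕ) : Matrix (Fin 2) (Fin 2) ℝ :=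
  !![1, alph d D; 0, bet d D]

/-- The `k = 2` transfer matrix at the transposition `x = (1 2)`, `T_x = [[β, 0], [α, 1]]`. -/
noncomputable def Tx (d D : ℕ) : Matrix (Fin 2) (Fin 2) ℝ :=
  !![bet d D, 0; alph d D, 1]

lemma key_facts (x y : ℝ) (hx : (2:ℝ) ≤ x) (hy : (2:ℝ) ≤ y) :
    0 < x * y ^ 2 - x ∧ 0 < x ^ 2 * y ^ 2 - 1 ∧ x * y ^ 2 - x < x ^ 2 * y ^ 2 - 1 ∧
      0 < x ^ 2 * y - y ∧
      x * y ^ 2 - x + (x ^ 2 * y - y) ≤ x ^ 2 * y ^ 2 - 1 := by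
  have hx0 : (0:ℝ) < x := by linarith
  have hy0 : (0:ℝ) < y := by linarith
  have h4 : (4:ℝ) ≤ x * y := by nlinarith
  have hy2 : (0:ℝ) < y ^ 2 - 1 := by nlinarith
  have hx2 : (0:ℝ) < x ^ 2 - 1 := by nlinarith
  refine ⟨by nlinarith [mul_pos hx0 hy2], by nlinarith, ?_, by nlinarith [mul_pos hy0 hx2], ?_⟩
  · nlinarith [mul_pos (show (0:ℝ) < x - 1 by linarith)
      (show (0:ℝ) < x * y ^ 2 + 1 by nlinarith [mul_pos hx0 (pow_pos hy0 2)])]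
  · nlinarith [mul_nonneg (mul_nonneg (show (0:ℝ) ≤ y - 1 by linarith)
      (show (0:ℝ) ≤ x * y - 1 by linarith)) (show (0:ℝ) ≤ x - 1 by linarith)]

lemma bet_pos (d D : ℕ) (hd : 2 ≤ d) (hD : 2 ≤ D) : 0 < bet d D := by
  have hd' : (2:ℝ) ≤ d := by exact_mod_cast hd
  have hD' : (2:ℝ) ≤ D := by exact_mod_cast hD
  obtain ⟨h1, h2, -, -, -⟩ := key_facts (d:ℝ) (D:ℝ) hd' hD'
  exact div_pos h1 h2

lemma bet_lt_one (d D : ℕ) (hd : 2 ≤ d) (hD : 2 ≤ D) : bet d D < 1 := by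
  have hd' : (2:ℝ) ≤ d := by exact_mod_cast hd
  have hD' : (2:ℝ) ≤ D := by exact_mod_cast hD
  obtain ⟨-, h2, h3, -, -⟩ := key_facts (d:ℝ) (D:ℝ) hd' hD'
  rw [bet, div_lt_one (by linarith)]
  linarith

lemma alph_pos (d D : ℕ) (hd : 2 ≤ d) (hD : 2 ≤ D) : 0 < alph d D := by
  have hd' : (2:ℝ) ≤ d := by exact_mod_cast hd
  have hD' : (2:ℝ) ≤ D := by exact_mod_cast hD
  obtain ⟨-, h2, -, h4, -⟩ := key_facts (d:ℝ) (D:ℝ) hd' hD'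
  exact div_pos (by linarith) h2

lemma alph_le (d D : ℕ) (hd : 2 ≤ d) (hD : 2 ≤ D) : alph d D ≤ 1 - bet d D := by
  have hd' : (2:ℝ) ≤ d := by exact_mod_cast hd
  have hD' : (2:ℝ) ≤ D := by exact_mod_cast hD
  obtain ⟨-, h2, -, -, h5⟩ := key_facts (d:ℝ) (D:ℝ) hd' hD'
  have h : alph d D + bet d D ≤ 1 := by
    rw [alph, bet, ← add_div, div_le_one (by linarith)]
    linarith
  linarith

lemma Tx_pow (d D : ℕ) (h : (1:ℝ) - bet d D ≠ 0) (n : ℕ) :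
    (Tx d D) ^ n = !![bet d D ^ n, 0;
      alph d D / (1 - bet d D) * (1 - bet d D ^ n), 1] := by
  induction n with
  | zero => simp [Matrix.one_fin_two]
  | succ n ih =>
    rw [pow_succ, ih, Tx, Matrix.mul_fin_two]
    ext i j
    fin_cases i <;> fin_cases j <;>
      (try simp) <;> (try field_simp) <;> (try ring)

lemma C2_pow (d D : ℕ) (h : (1:ℝ) - bet d D ≠ 0) (r : ℕ) :
    (C2 d D) ^ r = !![1, alph d D / (1 - bet d D) * (1 - bet d D ^ r);
      0, bet d D ^ r] := by
  induction r with
  | zero => simp [Matrix.one_fin_two]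
  | succ r ih =>
    rw [pow_succ, ih, C2, Matrix.mul_fin_two]
    ext i j
    fin_cases i <;> fin_cases j <;>
      (try simp) <;> (try field_simp) <;> (try ring)

/-- Exact transfer-matrix identity underlying the exponential decay of the average Rényi-2
mutual information of the random MPS ensemble: for a normalized left fixed vector `v` of
`C₂`, one has `v T_x^a C₂^r T_x^b δ_e = (v T_x^a δ_e)(v T_x^b δ_e)(1 + K β^r)` for a
constant `K`, with `v T_x^a δ_e, v T_x^b δ_e > 0`. -/
theorem mps_renyi2_transfer_identity (d D : ℕ) (hd : 2 ≤ d) (hD : 2 ≤ D)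
    (a b : ℕ) (ha : 1 ≤ a) (hb : 1 ≤ b) (v : Fin 2 → ℝ)
    (hv : v ᵥ* C2 d D = v) (hv1 : v ⬝ᵥ ![1, 0] = 1) :
    0 < v ⬝ᵥ ((Tx d D) ^ a).mulVec ![1, 0] ∧
    0 < v ⬝ᵥ ((Tx d D) ^ b).mulVec ![1, 0] ∧
    ∃ K : ℝ, ∀ r : ℕ,
      v ⬝ᵥ ((Tx d D) ^ a * (C2 d D) ^ r * (Tx d D) ^ b).mulVec ![1, 0] =
        (v ⬝ᵥ ((Tx d D) ^ a).mulVec ![1, 0]) * (v ⬝ᵥ ((Tx d D) ^ b).mulVec ![1, 0]) *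
          (1 + K * (bet d D) ^ r) := by
  set α := alph d D with hα
  set β := bet d D with hβ
  have hβ0 : 0 < β := bet_pos d D hd hD
  have hβ1 : β < 1 := bet_lt_one d D hd hD
  have hne : (1:ℝ) - β ≠ 0 := by linarith
  set c : ℝ := α / (1 - β) with hc
  have hc0 : 0 < c := div_pos (alph_pos d D hd hD) (by linarith)
  have hc1 : c ≤ 1 := by
    rw [hc, div_le_one (by linarith)]
    exact alph_le d D hd hD
  -- determine v
  have hv0 : v 0 = 1 := by
    simpa [dotProduct, Fin.sum_univ_two] using hv1
  have hvc : v 1 = c := by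
    have h1 := congrFun hv 1
    simp [C2, Matrix.vecMul, dotProduct, Fin.sum_univ_two, ← hα, ← hβ] at h1
    rw [hv0] at h1
    rw [hc]
    field_simp
    linarith [h1]
  have hvEq : v = ![1, c] := by
    funext i; fin_cases i <;> simp [hv0, hvc]
  -- generic evaluation
  have hf : ∀ n : ℕ, v ⬝ᵥ ((Tx d D) ^ n).mulVec ![1, 0] = β ^ n + c * c * (1 - β ^ n) := by
    intro n
    rw [Tx_pow d D hne n, hvEq]
    simp [Matrix.mulVec, dotProduct, Fin.sum_univ_two, ← hβ, ← hc]
    ring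
  have hβn : ∀ n : ℕ, 0 < β ^ n + c * c * (1 - β ^ n) := by
    intro n
    have h1 : β ^ n ≤ 1 := pow_le_one₀ hβ0.le hβ1.le
    have h2 : 0 < β ^ n := pow_pos hβ0 n
    nlinarith
  refine ⟨by rw [hf]; exact hβn a, by rw [hf]; exact hβn b, ?_⟩
  have hfane : (β ^ a + c * c * (1 - β ^ a)) * (β ^ b + c * c * (1 - β ^ b)) ≠ 0 :=
    (mul_pos (hβn a) (hβn b)).ne'
  refine ⟨c * c * (1 - c * c) * (1 - β ^ a) * (1 - β ^ b) /
      ((β ^ a + c * c * (1 - β ^ a)) * (β ^ b + c * c * (1 - β ^ b))), fun r => ?_⟩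
  rw [hf a, hf b, Tx_pow d D hne a, Tx_pow d D hne b, C2_pow d D hne r,
    Matrix.mul_fin_two, Matrix.mul_fin_two, hvEq]
  simp only [Matrix.mulVec, dotProduct, Fin.sum_univ_two, Matrix.cons_val_zero,
    Matrix.cons_val_one, Matrix.head_cons, Matrix.cons_val', Matrix.head_fin_const,
    Matrix.empty_val', Matrix.cons_val_fin_one, Matrix.of_apply]
  simp only [← hα, ← hβ, ← hc]
  rw [div_mul_eq_mul_div (c * c * (1 - c * c) * (1 - β ^ a) * (1 - β ^ b)), one_add_div hfane,
    mul_div_assoc', mul_div_cancel_left₀ _ hfane, hc]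
  ring
end
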